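/- For natural numbers n ≥ 1 and m ≥ 0, the integral of sin(x)^(2n-1) * cos(2x)^(m - 1/2) / cos(x)^(2n+2m) over x from 0 to π/4 equals (2^(2n-1) / n) * binomial(2m, m) / (binomial(2n+2m, n+m) * binomial(n+m, n)). -/

import Mathlib

open Real MeasureTheory intervalIntegral

lemma gamma_half (m : ℕ) :
    Real.Gamma ((m:ℝ) + 1/2) = Real.sqrt π * (Nat.factorial (2*m)) / (4^m * Nat.factorial m) := by
  induction m with
  | zero => simpa using Real.Gamma_one_half_eq
  | succ k ih =>
    have h : ((k:ℝ)+1) + 1/2 = ((k:ℝ) + 1/2) + 1 := by ring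
    have hne : ((k:ℝ) + 1/2) ≠ 0 := by positivity
    rw [Nat.cast_succ, h, Real.Gamma_add_one hne, ih]
    have h4 : (4:ℝ)^k ≠ 0 := by positivity
    have hk : ((Nat.factorial k) : ℝ) ≠ 0 := by positivity
    have e1 : Nat.factorial (2*(k+1)) = (2*k+2) * ((2*k+1) * Nat.factorial (2*k)) := by
      rw [show 2*(k+1) = (2*k+1)+1 by ring, Nat.factorial_succ, Nat.factorial_succ]
    rw [e1, Nat.factorial_succ]
    push_cast
    field_simp
    ring

lemma beta_val (n m : ℕ) (hn : 1 ≤ n) :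
    ∫ u in (0:ℝ)..1, u^(n-1:ℕ) * (1-u)^((m:ℝ)-1/2) =
      Real.Gamma n * Real.Gamma ((m:ℝ)+1/2) / Real.Gamma ((n:ℝ)+(m:ℝ)+1/2) := by
  set I : ℝ := ∫ u in (0:ℝ)..1, u^(n-1:ℕ) * (1-u)^((m:ℝ)-1/2) with hI
  have hs : 0 < ((n:ℂ)).re := by simp; exact_mod_cast hn
  have ht : 0 < ((m:ℂ)+1/2).re := by
    simp [Complex.add_re]
    positivity
  have hbeta := Complex.Gamma_mul_Gamma_eq_betaIntegral hs ht
  have hBI : Complex.betaIntegral (n:ℂ) ((m:ℂ)+1/2) = (I : ℂ) := by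
    rw [Complex.betaIntegral, hI, ← intervalIntegral.integral_ofReal]
    apply intervalIntegral.integral_congr
    intro x hx
    rw [Set.uIcc_of_le (by norm_num : (0:ℝ) ≤ 1)] at hx
    have hx0 : 0 ≤ x := hx.1
    have hx1 : 0 ≤ 1 - x := by linarith [hx.2]
    show (x:ℂ) ^ ((n:ℂ) - 1) * ((1:ℂ) - (x:ℂ)) ^ ((m:ℂ) + 1/2 - 1)
        = ((x ^ (n-1:ℕ) * (1 - x) ^ ((m:ℝ) - 1/2) : ℝ) : ℂ)
    rw [Complex.ofReal_mul, Complex.ofReal_cpow hx1]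
    symm
    congr 1
    · have e2 : ((n:ℂ) - 1) = ((n - 1 : ℕ) : ℂ) := by
        have : (1:ℕ) ≤ n := hn
        push_cast [this]
        ring
      rw [e2, Complex.cpow_natCast]
      push_cast
      ring
    · push_cast
      ring_nf
  have hGpos : 0 < Real.Gamma ((n:ℝ)+(m:ℝ)+1/2) := Real.Gamma_pos_of_pos (by positivity)
  have key : ((Real.Gamma n * Real.Gamma ((m:ℝ)+1/2) : ℝ) : ℂ) =
      ((Real.Gamma ((n:ℝ)+(m:ℝ)+1/2) * I : ℝ) : ℂ) := by
    push_cast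
    have c1 : ((n:ℂ)) = (((n:ℝ)):ℂ) := by push_cast; ring
    have c2 : ((m:ℂ)+1/2) = ((((m:ℝ)+1/2 : ℝ)):ℂ) := by push_cast; ring
    have c3 : ((n:ℂ)+((m:ℂ)+1/2)) = ((((n:ℝ)+(m:ℝ)+1/2 : ℝ)):ℂ) := by push_cast; ring
    rw [hBI, c3] at hbeta
    rw [c1, c2] at hbeta
    rw [Complex.Gamma_ofReal, Complex.Gamma_ofReal, Complex.Gamma_ofReal] at hbeta
    exact hbeta
  have h2 := Complex.ofReal_inj.mp key
  rw [eq_div_iff hGpos.ne']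
  linarith [h2]

lemma sq_image : (fun t : ℝ => t^2) '' Set.Ioo 0 1 = Set.Ioo 0 1 := by
  ext u
  constructor
  · rintro ⟨t, ⟨ht0, ht1⟩, rfl⟩
    refine ⟨by positivity, ?_⟩
    show t^2 < 1
    nlinarith
  · rintro ⟨hu0, hu1⟩
    exact ⟨Real.sqrt u, ⟨Real.sqrt_pos.mpr hu0,
      by rw [show (1:ℝ) = Real.sqrt 1 by simp]; exact Real.sqrt_lt_sqrt hu0.le hu1⟩,
      Real.sq_sqrt hu0.le⟩

lemma sq_subst (n m : ℕ) (hn : 1 ≤ n) :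
    ∫ u in (0:ℝ)..1, u^(n-1:ℕ) * (1-u)^((m:ℝ)-1/2) =
      2 * ∫ t in (0:ℝ)..1, t^(2*n-1:ℕ) * (1-t^2)^((m:ℝ)-1/2) := by
  rw [intervalIntegral.integral_of_le (by norm_num : (0:ℝ) ≤ 1),
      intervalIntegral.integral_of_le (by norm_num : (0:ℝ) ≤ 1),
      MeasureTheory.integral_Ioc_eq_integral_Ioo,
      MeasureTheory.integral_Ioc_eq_integral_Ioo]
  conv_lhs => rw [← sq_image]
  rw [integral_image_eq_integral_abs_deriv_smul measurableSet_Ioo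
      (f' := fun t => 2*t)
      (fun x _ => by simpa using (hasDerivAt_pow 2 x).hasDerivWithinAt)
      (fun a ha b hb h => by
        simp only [Set.mem_Ioo] at ha hb
        nlinarith [ha.1, hb.1])]
  rw [← MeasureTheory.integral_const_mul]
  apply MeasureTheory.setIntegral_congr_fun measurableSet_Ioo
  intro t ht
  simp only [Set.mem_Ioo] at ht
  have h1 : |2*t| = 2*t := abs_of_pos (by linarith [ht.1])
  show |2*t| • ((t^2)^(n-1:ℕ) * (1-t^2)^((m:ℝ)-1/2)) =
      2 * (t^(2*n-1:ℕ) * (1-t^2)^((m:ℝ)-1/2))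
  rw [smul_eq_mul, h1]
  have h2 : (t^2)^(n-1:ℕ) = t^(2*n-2:ℕ) := by
    rw [← pow_mul]
    congr 1
    omega
  rw [h2]
  have h3 : 2*t * (t^(2*n-2:ℕ) * (1-t^2)^((m:ℝ)-1/2)) =
      2 * (t * t^(2*n-2:ℕ) * (1-t^2)^((m:ℝ)-1/2)) := by ring
  rw [h3]
  congr 2
  rw [← pow_succ']
  congr 1
  omega

lemma tan_image : Real.tan '' Set.Ioo 0 (π/4) = Set.Ioo 0 1 := by
  have hpi : 0 < π := Real.pi_pos
  ext u
  constructor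
  · rintro ⟨x, ⟨hx0, hx1⟩, rfl⟩
    constructor
    · show (0:ℝ) < Real.tan x
      rw [← Real.tan_zero]
      exact Real.strictMonoOn_tan ⟨by linarith, by linarith⟩ ⟨by linarith, by linarith⟩ hx0
    · show Real.tan x < 1
      rw [← Real.tan_pi_div_four]
      exact Real.strictMonoOn_tan ⟨by linarith, by linarith⟩ ⟨by linarith, by linarith⟩ hx1
  · rintro ⟨hu0, hu1⟩
    refine ⟨Real.arctan u, ⟨?_, ?_⟩, Real.tan_arctan u⟩
    · rw [← Real.arctan_zero]
      exact Real.arctan_strictMono hu0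
    · rw [← Real.arctan_one]
      exact Real.arctan_strictMono hu1

lemma tan_injOn : Set.InjOn Real.tan (Set.Ioo 0 (π/4)) := by
  have hpi : 0 < π := Real.pi_pos
  apply Real.strictMonoOn_tan.injOn.mono
  intro x hx
  exact ⟨by linarith [hx.1], by linarith [hx.2]⟩

lemma tan_subst (n m : ℕ) (hn : 1 ≤ n) :
    ∫ x in (0:ℝ)..(π/4), (Real.sin x) ^ (2 * n - 1 : ℕ) * (Real.cos (2 * x)) ^ ((m : ℝ) - 1/2) *
        (Real.cos x) ^ (-(2 * (n : ℝ) + 2 * (m : ℝ))) =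
      ∫ t in (0:ℝ)..1, t^(2*n-1:ℕ) * (1-t^2)^((m:ℝ)-1/2) := by
  have hpi : 0 < π := Real.pi_pos
  rw [intervalIntegral.integral_of_le (by positivity : (0:ℝ) ≤ π/4),
      intervalIntegral.integral_of_le (by norm_num : (0:ℝ) ≤ 1),
      MeasureTheory.integral_Ioc_eq_integral_Ioo,
      MeasureTheory.integral_Ioc_eq_integral_Ioo]
  conv_rhs => rw [← tan_image]
  rw [integral_image_eq_integral_abs_deriv_smul measurableSet_Ioo
      (f' := fun x => 1 / Real.cos x ^ 2)
      (fun x hx => (Real.hasDerivAt_tan (by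
        have h := Real.cos_pos_of_mem_Ioo (show x ∈ Set.Ioo (-(π/2)) (π/2) from
          ⟨by linarith [hx.1], by linarith [hx.2]⟩)
        exact h.ne')).hasDerivWithinAt)
      tan_injOn]
  apply MeasureTheory.setIntegral_congr_fun measurableSet_Ioo
  intro x hx
  obtain ⟨hx0, hx1⟩ := hx
  have hc : 0 < Real.cos x := Real.cos_pos_of_mem_Ioo ⟨by linarith, by linarith⟩
  have hc2 : 0 < Real.cos (2*x) := Real.cos_pos_of_mem_Ioo ⟨by linarith, by linarith⟩
  set c := Real.cos x with hcdef
  set s := Real.sin x with hsdef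
  set d := Real.cos (2*x) with hddef
  show (sin x) ^ (2 * n - 1 : ℕ) * d ^ ((m : ℝ) - 1/2) * c ^ (-(2 * (n : ℝ) + 2 * (m : ℝ)))
      = |1/c^2| • ((Real.tan x)^(2*n-1:ℕ) * (1-(Real.tan x)^2)^((m:ℝ)-1/2))
  rw [smul_eq_mul, abs_of_pos (by positivity)]
  have htan : Real.tan x = s / c := Real.tan_eq_sin_div_cos x
  have hd : 1 - Real.tan x ^ 2 = d / c^2 := by
    rw [htan, div_pow, hddef, Real.cos_two_mul' ]
    field_simp
    rfl
  rw [hd, htan, div_pow, Real.div_rpow hc2.le (by positivity)]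
  -- now express c powers
  have e1 : c ^ (-(2 * (n : ℝ) + 2 * (m : ℝ))) =
      1/c^2 * (1/c^(2*n-1:ℕ)) * (1/(c^2)^((m:ℝ)-1/2)) := by
    have h1 : (c:ℝ)^(2*n-1:ℕ) = c ^ ((2*n-1:ℕ):ℝ) := (Real.rpow_natCast c _).symm
    have h2 : ((c:ℝ)^2)^((m:ℝ)-1/2) = c ^ (2*((m:ℝ)-1/2)) := by
      rw [Real.rpow_mul hc.le, Real.rpow_two]
    have h3 : (c:ℝ)^(2:ℕ) = c ^ ((2:ℕ):ℝ) := (Real.rpow_natCast c _).symm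
    rw [h1, h2]
    rw [show ((1:ℝ)/c^2) = c ^ (-(2:ℝ)) by
      rw [Real.rpow_neg hc.le, one_div]
      norm_num]
    rw [one_div, one_div, ← Real.rpow_neg hc.le, ← Real.rpow_neg hc.le,
      ← Real.rpow_add hc, ← Real.rpow_add hc]
    congr 1
    have : ((2*n-1:ℕ):ℝ) = 2*(n:ℝ)-1 := by
      have h2n : 1 ≤ 2*n := by omega
      push_cast [h2n]
      ring
    rw [this]
    ring
  rw [e1]
  ring
theorem stmt17 (n m : ℕ) (hn : 1 ≤ n) :
    ∫ x in (0:ℝ)..(π/4), (Real.sin x) ^ (2 * n - 1 : ℕ) * (Real.cos (2 * x)) ^ ((m : ℝ) - 1/2) *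
        (Real.cos x) ^ (-(2 * (n : ℝ) + 2 * (m : ℝ))) =
      2 ^ (2 * n - 1) / (n : ℝ) * (Nat.choose (2 * m) m : ℝ) /
        ((Nat.choose (2 * n + 2 * m) (n + m) : ℝ) * (Nat.choose (n + m) n : ℝ)) := by
  rw [tan_subst n m hn]
  have h2 : ∫ t in (0:ℝ)..1, t^(2*n-1:ℕ) * (1-t^2)^((m:ℝ)-1/2) =
      (1/2) * ∫ u in (0:ℝ)..1, u^(n-1:ℕ) * (1-u)^((m:ℝ)-1/2) := by
    rw [sq_subst n m hn]; ring
  rw [h2, beta_val n m hn]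
  -- Gamma values
  have hGn : Real.Gamma (n:ℝ) = Nat.factorial (n-1) := by
    have := Real.Gamma_nat_eq_factorial (n-1)
    rwa [show ((n-1:ℕ):ℝ) + 1 = (n:ℝ) by
      have h1 : (1:ℕ) ≤ n := hn
      push_cast [h1]; ring] at this
  have hGm := gamma_half m
  have hGnm : Real.Gamma ((n:ℝ)+(m:ℝ)+1/2) =
      Real.sqrt π * (Nat.factorial (2*(n+m))) / (4^(n+m) * Nat.factorial (n+m)) := by
    have := gamma_half (n+m)
    rwa [show (((n+m:ℕ)):ℝ) + 1/2 = (n:ℝ)+(m:ℝ)+1/2 by push_cast; ring] at this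
  rw [hGn, hGm, hGnm]
  -- choose values
  have hc1 : (Nat.choose (2*m) m : ℝ) =
      Nat.factorial (2*m) / (Nat.factorial m * Nat.factorial m) := by
    rw [Nat.cast_choose ℝ (by omega : m ≤ 2*m), show 2*m - m = m by omega]
  have hc2 : (Nat.choose (2*n+2*m) (n+m) : ℝ) =
      Nat.factorial (2*n+2*m) / (Nat.factorial (n+m) * Nat.factorial (n+m)) := by
    rw [Nat.cast_choose ℝ (by omega : n+m ≤ 2*n+2*m), show 2*n+2*m - (n+m) = n+m by omega]
  have hc3 : (Nat.choose (n+m) n : ℝ) =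
      Nat.factorial (n+m) / (Nat.factorial n * Nat.factorial m) := by
    rw [Nat.cast_choose ℝ (by omega : n ≤ n+m), show n+m - n = m by omega]
  rw [hc1, hc2, hc3]
  have hfn : (Nat.factorial n : ℝ) = n * Nat.factorial (n-1) := by
    rw [← Nat.mul_factorial_pred (by omega : n ≠ 0)]; push_cast; ring
  rw [hfn, show 2*(n+m) = 2*n+2*m by ring]
  have hpow : (4:ℝ)^(n+m) = 2 * 2^(2*n-1:ℕ) * 4^m := by
    rw [show (4:ℝ) = 2^2 by norm_num, ← pow_mul, ← pow_mul,
      show 2*(n+m) = (2*n-1) + 1 + 2*m by omega, pow_add, pow_succ]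
    ring
  rw [hpow]
  have hsπ : Real.sqrt π ≠ 0 := by positivity
  have hnn : (n:ℝ) ≠ 0 := by exact_mod_cast (by omega : n ≠ 0)
  have f1 : (Nat.factorial (n-1) : ℝ) ≠ 0 := by positivity
  have f2 : (Nat.factorial m : ℝ) ≠ 0 := by positivity
  have f3 : (Nat.factorial (n+m) : ℝ) ≠ 0 := by positivity
  have f4 : (Nat.factorial (2*m) : ℝ) ≠ 0 := by positivity
  have f5 : (Nat.factorial (2*n+2*m) : ℝ) ≠ 0 := by positivity
  have f6 : (4:ℝ)^m ≠ 0 := by positivity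
  have f7 : (2:ℝ)^(2*n-1:ℕ) ≠ 0 := by positivity
  field_simp
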